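/- arXiv:1207.4366 — 6 statements merged into one kernel-verified Lean document; each statement's English description precedes it below -/
import Mathlib

section
/- Let F be an intersection-closed biset-family covered by an edge set F₀, and let U ⊆ F be a subfamily of pairwise disjoint bisets such that every edge of F₀ has its tail in the inner part of some member of U and each Û ∈ U is covered by exactly one edge e_U of F₀. Let J ⊆ F₀ cover F[U] = {Ŝ ∈ F : Ŝ ⊆ Û for some Û ∈ U}, and let Ĉ be a core of the residual family F^J. Then for any Û ∈ U intersecting Ĉ, the only edge of J covering Ĉ ∩ Û is e_U; consequently Û intersects no core of F^J other than Ĉ. -/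
open Set

variable {V : Type*}

/-- A pair `(S, S⁺)` is a biset when `S ⊆ S⁺`. -/
def IsBiset (X : Set V × Set V) : Prop := X.1 ⊆ X.2

/-- An edge `(u,v)` covers biset `(S,S⁺)` if `u ∈ S` and `v ∈ V ∖ S⁺`. -/
def Covers (e : V × V) (X : Set V × Set V) : Prop := e.1 ∈ X.1 ∧ e.2 ∈ X.2ᶜ

/-- Componentwise intersection of bisets. -/
def bCap (X Y : Set V × Set V) : Set V × Set V := (X.1 ∩ Y.1, X.2 ∩ Y.2)

/-- Componentwise union of bisets. -/
def bCup (X Y : Set V × Set V) : Set V × Set V := (X.1 ∪ Y.1, X.2 ∪ Y.2)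

/-- Bisets intersect if their inner parts intersect. -/
def Intersects (X Y : Set V × Set V) : Prop := (X.1 ∩ Y.1).Nonempty

/-- Bisets cross if inner parts intersect and outer parts do not cover `V`. -/
def Cross (X Y : Set V × Set V) : Prop := (X.1 ∩ Y.1).Nonempty ∧ X.2 ∪ Y.2 ≠ Set.univ

/-- Co-biset of `(S,S⁺)` is `(V∖S⁺, V∖S)`. -/
def coBiset (X : Set V × Set V) : Set V × Set V := (X.2ᶜ, X.1ᶜ)

/-- Crossing biset-family. -/
def CrossingFamily (F : Set (Set V × Set V)) : Prop :=
  ∀ X ∈ F, ∀ Y ∈ F, Cross X Y → bCap X Y ∈ F ∧ bCup X Y ∈ F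

/-- Intersecting biset-family. -/
def IntersectingFamily (F : Set (Set V × Set V)) : Prop :=
  ∀ X ∈ F, ∀ Y ∈ F, Intersects X Y → bCap X Y ∈ F ∧ bCup X Y ∈ F

/-- Intersection-closed biset-family. -/
def IntersectionClosed (F : Set (Set V × Set V)) : Prop :=
  ∀ X ∈ F, ∀ Y ∈ F, Intersects X Y → bCap X Y ∈ F

/-- A biset is covered by some edge of `J`. -/
def CoveredBy (J : Set (V × V)) (X : Set V × Set V) : Prop := ∃ e ∈ J, Covers e X

/-- `J` covers every member of the family `F`. -/
def CoversFamily (J : Set (V × V)) (F : Set (Set V × Set V)) : Prop := ∀ X ∈ F, CoveredBy J X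

/-- Residual family: members of `F` not covered by any edge of `J`. -/
def Residual (F : Set (Set V × Set V)) (J : Set (V × V)) : Set (Set V × Set V) :=
  {X ∈ F | ¬ CoveredBy J X}

/-- Biset containment, componentwise. -/
def bSubset (X Y : Set V × Set V) : Prop := X.1 ⊆ Y.1 ∧ X.2 ⊆ Y.2

/-- A core of `F` : an inclusion-minimal member. -/
def IsCore (F : Set (Set V × Set V)) (C : Set V × Set V) : Prop :=
  C ∈ F ∧ ∀ S ∈ F, bSubset S C → S = C

/-- `F(Ĉ)` : members of `F` containing `Ĉ` and no other core of `F`. -/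
def FamAt (F : Set (Set V × Set V)) (C : Set V × Set V) : Set (Set V × Set V) :=
  {S ∈ F | bSubset C S ∧ ∀ C', IsCore F C' → bSubset C' S → C' = C}

/-- `F[U]` : members of `F` contained in some member of `U`. -/
def FamUnder (F U : Set (Set V × Set V)) : Set (Set V × Set V) :=
  {S ∈ F | ∃ W ∈ U, bSubset S W}

/-- `k`-regular biset-family. -/
def kRegular (k : ℕ) (F : Set (Set V × Set V)) : Prop :=
  ∀ X ∈ F, ∀ Y ∈ F, Intersects X Y → k + 1 ≤ (X.1 ∪ Y.1)ᶜ.ncard →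
    bCap X Y ∈ F ∧ bCup X Y ∈ F

/-- `q`-semi-intersecting biset-family. -/
def qSemiIntersecting (q : ℕ) (S : Set (Set V × Set V)) : Prop :=
  IntersectionClosed S ∧ (∀ X ∈ S, X.1.ncard ≤ q) ∧
  ∀ X ∈ S, ∀ Y ∈ S, Intersects X Y → (X.1 ∪ Y.1).ncard ≤ q → bCup X Y ∈ S

theorem stmt_12 (F U : Set (Set V × Set V)) (F₀ J : Set (V × V))
    (eU : (Set V × Set V) → V × V)
    (hF : IntersectionClosed F)
    (hcov : CoversFamily F₀ F)
    (hUF : U ⊆ F)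
    (hdisj : ∀ X ∈ U, ∀ Y ∈ U, X ≠ Y → ¬ Intersects X Y)
    (htail : ∀ e ∈ F₀, ∃ W ∈ U, e.1 ∈ W.1)
    (heU : ∀ W ∈ U, eU W ∈ F₀ ∧ Covers (eU W) W ∧ ∀ e ∈ F₀, Covers e W → e = eU W)
    (hJ : J ⊆ F₀)
    (hJcov : CoversFamily J (FamUnder F U))
    (C : Set V × Set V) (hC : IsCore (Residual F J) C)
    (W : Set V × Set V) (hW : W ∈ U) (hWC : Intersects W C) :
    {e ∈ J | Covers e (bCap C W)} = {eU W} ∧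
    ∀ C', IsCore (Residual F J) C' → Intersects W C' → C' = C := by
  have key : ∀ D, IsCore (Residual F J) D → Intersects W D →
      {e ∈ J | Covers e (bCap D W)} = {eU W} := by
    intro D hD hWD
    have hDF : D ∈ F := hD.1.1
    have hDnc : ¬ CoveredBy J D := hD.1.2
    have hint : Intersects D W := by
      obtain ⟨x, hx1, hx2⟩ := hWD
      exact ⟨x, hx2, hx1⟩
    have hcap : bCap D W ∈ F := hF D hDF W (hUF hW) hint
    have hmem : bCap D W ∈ FamUnder F U :=
      ⟨hcap, W, hW, inter_subset_right, inter_subset_right⟩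
    obtain ⟨e₀, he₀J, he₀c⟩ := hJcov _ hmem
    have uniq : ∀ e ∈ J, Covers e (bCap D W) → e = eU W := by
      intro e heJ hec
      have he1D : e.1 ∈ D.1 := hec.1.1
      have he2D : e.2 ∈ D.2 := by
        by_contra h
        exact hDnc ⟨e, heJ, he1D, h⟩
      have he2W : e.2 ∉ W.2 := fun h => hec.2 ⟨he2D, h⟩
      exact (heU W hW).2.2 e (hJ heJ) ⟨hec.1.2, he2W⟩
    ext e
    simp only [mem_setOf_eq, mem_singleton_iff]
    constructor
    · rintro ⟨heJ, hec⟩; exact uniq e heJ hec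
    · rintro rfl
      have := uniq e₀ he₀J he₀c
      subst this
      exact ⟨he₀J, he₀c⟩
  have h1 := key C hC hWC
  refine ⟨h1, ?_⟩
  intro C' hC' hWC'
  have h2 := key C' hC' hWC'
  have hmemC : eU W ∈ {e ∈ J | Covers e (bCap C W)} := h1 ▸ rfl
  have hmemC' : eU W ∈ {e ∈ J | Covers e (bCap C' W)} := h2 ▸ rfl
  obtain ⟨heJ, hecC⟩ := hmemC
  obtain ⟨-, hecC'⟩ := hmemC'
  have hint : Intersects C C' := ⟨(eU W).1, hecC.1.1, hecC'.1.1⟩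
  have hcap : bCap C C' ∈ F := hF C hC.1.1 C' hC'.1.1 hint
  have hres : bCap C C' ∈ Residual F J := by
    refine ⟨hcap, ?_⟩
    rintro ⟨e, heJ', hec⟩
    have he2C : e.2 ∈ C.2 := by
      by_contra h
      exact hC.1.2 ⟨e, heJ', hec.1.1, h⟩
    have he2C' : e.2 ∈ C'.2 := by
      by_contra h
      exact hC'.1.2 ⟨e, heJ', hec.1.2, h⟩
    exact hec.2 ⟨he2C, he2C'⟩
  have hc1 : bCap C C' = C := hC.2 _ hres ⟨inter_subset_left, inter_subset_left⟩
  have hc2 : bCap C C' = C' := hC'.2 _ hres ⟨inter_subset_right, inter_subset_right⟩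
  exact hc2.symm.trans hc1
end

section
/- Under the hypotheses of the previous setting — F intersection-closed and covered by edge set F₀, U ⊆ F a family of pairwise disjoint bisets with every edge of F₀ having its tail in the inner part of some member of U and |δ_{F₀}(Û)| = 1 for each Û ∈ U, and J ⊆ F₀ covering F[U] — let Ĉ be a core of F^J and let B̂_C be the union of Ĉ with all members of U intersecting Ĉ. Then no edge of F₀ covers B̂_C; consequently B̂_C ∉ F. -/
open Set

variable {V : Type*}

theorem stmt_13 (F U : Set (Set V × Set V)) (F₀ J : Set (V × V))
    (eU : (Set V × Set V) → V × V)
    (hF : IntersectionClosed F)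
    (hcov : CoversFamily F₀ F)
    (hUF : U ⊆ F)
    (hdisj : ∀ X ∈ U, ∀ Y ∈ U, X ≠ Y → ¬ Intersects X Y)
    (htail : ∀ e ∈ F₀, ∃ W ∈ U, e.1 ∈ W.1)
    (heU : ∀ W ∈ U, eU W ∈ F₀ ∧ Covers (eU W) W ∧ ∀ e ∈ F₀, Covers e W → e = eU W)
    (hJ : J ⊆ F₀)
    (hJcov : CoversFamily J (FamUnder F U))
    (C : Set V × Set V) (hC : IsCore (Residual F J) C)
    (B : Set V × Set V)
    (hB : B = (C.1 ∪ ⋃ W ∈ {X ∈ U | Intersects X C}, W.1,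
               C.2 ∪ ⋃ W ∈ {X ∈ U | Intersects X C}, W.2)) :
    (∀ e ∈ F₀, ¬ Covers e B) ∧ B ∉ F := by
  subst hB
  have hCF : C ∈ F := hC.1.1
  have hCJ : ¬ CoveredBy J C := hC.1.2
  have key : ∀ e ∈ F₀,
      ¬ Covers e (C.1 ∪ ⋃ W ∈ {X ∈ U | Intersects X C}, W.1,
                  C.2 ∪ ⋃ W ∈ {X ∈ U | Intersects X C}, W.2) := by
    intro e he hcovB
    obtain ⟨h1, h2⟩ := hcovB
    simp only [Set.mem_compl_iff] at h2
    obtain ⟨W₀, hW₀U, hW₀e⟩ := htail e he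
    have hWex : ∃ W ∈ U, Intersects W C ∧ e.1 ∈ W.1 := by
      rcases h1 with h | h
      · exact ⟨W₀, hW₀U, ⟨e.1, hW₀e, h⟩, hW₀e⟩
      · simp only [Set.mem_iUnion, Set.mem_sep_iff] at h
        obtain ⟨W, ⟨hWU, hWC⟩, hWe⟩ := h
        exact ⟨W, hWU, hWC, hWe⟩
    obtain ⟨W, hWU, hWC, hWe⟩ := hWex
    have hWF : W ∈ F := hUF hWU
    have hcap : bCap W C ∈ F := hF W hWF C hCF hWC
    have hcapU : bCap W C ∈ FamUnder F U :=
      ⟨hcap, W, hWU, Set.inter_subset_left, Set.inter_subset_left⟩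
    obtain ⟨f, hfJ, hf1, hf2⟩ := hJcov _ hcapU
    have hfC2 : f.2 ∈ C.2 := by
      by_contra hfc
      exact hCJ ⟨f, hfJ, hf1.2, hfc⟩
    have hfW : Covers f W := ⟨hf1.1, fun h => hf2 ⟨h, hfC2⟩⟩
    have hfeq : f = eU W := (heU W hWU).2.2 f (hJ hfJ) hfW
    have heW : Covers e W := by
      refine ⟨hWe, fun h => h2 ?_⟩
      exact Set.mem_union_right _ (Set.mem_biUnion ⟨hWU, hWC⟩ h)
    have heeq : e = eU W := (heU W hWU).2.2 e he heW
    have hef : e = f := heeq.trans hfeq.symm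
    exact h2 (Set.mem_union_left _ (hef ▸ hfC2))
  refine ⟨key, fun hBF => ?_⟩
  obtain ⟨e, he, hce⟩ := hcov _ hBF
  exact key e he hce
end

section
/- Let F be an intersection-closed biset-family on V and let J be a set of directed edges such that for every core Ĉ of F, J covers every member of F(Ĉ) (the bisets of F containing Ĉ and no other core). Then every core of the residual family F^J contains at least two distinct cores of F; hence the number of cores satisfies ν(F^J) ≤ ν(F)/2. -/
open Set

variable {V : Type*}

lemma bSubset_refl (X : Set V × Set V) : bSubset X X := ⟨subset_rfl, subset_rfl⟩

lemma bSubset_trans {X Y Z : Set V × Set V} (h1 : bSubset X Y) (h2 : bSubset Y Z) :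
    bSubset X Z := ⟨h1.1.trans h2.1, h1.2.trans h2.2⟩

lemma exists_core [Fintype V] {F : Set (Set V × Set V)} {X : Set V × Set V} (hX : X ∈ F) :
    ∃ C, IsCore F C ∧ bSubset C X := by
  obtain ⟨C, hC, hmin⟩ := Set.Finite.exists_minimalFor id {S ∈ F | bSubset S X}
    (Set.toFinite _) ⟨X, hX, bSubset_refl X⟩
  refine ⟨C, ⟨hC.1, fun S hS hSC => ?_⟩, hC.2⟩
  have hS' : S ∈ {S ∈ F | bSubset S X} := ⟨hS, bSubset_trans hSC hC.2⟩
  exact le_antisymm (Prod.le_def.mpr hSC) (hmin hS' (Prod.le_def.mpr hSC))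

lemma self_mem_FamAt {F : Set (Set V × Set V)} {C : Set V × Set V} (hC : IsCore F C) :
    C ∈ FamAt F C :=
  ⟨hC.1, bSubset_refl C, fun C' hC' hsub => hC.2 C' hC'.1 hsub⟩

lemma core_inner_nonempty {F : Set (Set V × Set V)} {J : Set (V × V)}
    (hJ : ∀ C, IsCore F C → CoversFamily J (FamAt F C))
    {C : Set V × Set V} (hC : IsCore F C) : C.1.Nonempty := by
  obtain ⟨e, _, he1, _⟩ := hJ C hC C (self_mem_FamAt hC)
  exact ⟨e.1, he1⟩

lemma res_cores_sep {F : Set (Set V × Set V)} {J : Set (V × V)}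
    (hF : IntersectionClosed F)
    (hJ : ∀ C, IsCore F C → CoversFamily J (FamAt F C))
    {C' D' C : Set V × Set V}
    (hC' : IsCore (Residual F J) C') (hD' : IsCore (Residual F J) D')
    (hC : IsCore F C) (h1 : bSubset C C') (h2 : bSubset C D') : C' = D' := by
  obtain ⟨x, hx⟩ := core_inner_nonempty hJ hC
  have hint : Intersects C' D' := ⟨x, h1.1 hx, h2.1 hx⟩
  have hcap : bCap C' D' ∈ F := hF _ hC'.1.1 _ hD'.1.1 hint
  have huncov : ¬ CoveredBy J (bCap C' D') := by
    rintro ⟨e, heJ, he1, he2⟩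
    rcases not_and_or.mp (he2 : e.2 ∉ C'.2 ∩ D'.2) with h | h
    · exact hC'.1.2 ⟨e, heJ, he1.1, h⟩
    · exact hD'.1.2 ⟨e, heJ, he1.2, h⟩
  have hres : bCap C' D' ∈ Residual F J := ⟨hcap, huncov⟩
  have e1 : bCap C' D' = C' := hC'.2 _ hres ⟨inter_subset_left, inter_subset_left⟩
  have e2 : bCap C' D' = D' := hD'.2 _ hres ⟨inter_subset_right, inter_subset_right⟩
  exact e1.symm.trans e2

theorem stmt_14 [Fintype V] (F : Set (Set V × Set V)) (J : Set (V × V))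
    (hF : IntersectionClosed F)
    (hJ : ∀ C, IsCore F C → CoversFamily J (FamAt F C)) :
    (∀ C', IsCore (Residual F J) C' →
      ∃ C₁ C₂, IsCore F C₁ ∧ IsCore F C₂ ∧ C₁ ≠ C₂ ∧ bSubset C₁ C' ∧ bSubset C₂ C') ∧
    2 * {C | IsCore (Residual F J) C}.ncard ≤ {C | IsCore F C}.ncard := by
  have part1 : ∀ C', IsCore (Residual F J) C' →
      ∃ C₁ C₂, IsCore F C₁ ∧ IsCore F C₂ ∧ C₁ ≠ C₂ ∧ bSubset C₁ C' ∧ bSubset C₂ C' := by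
    intro C' hC'
    obtain ⟨C₁, hC₁, hsub₁⟩ := exists_core hC'.1.1
    by_contra h
    push_neg at h
    have hall : ∀ C₂, IsCore F C₂ → bSubset C₂ C' → C₂ = C₁ := by
      intro C₂ hC₂ hsub₂
      by_contra hne
      exact h C₁ C₂ hC₁ hC₂ (Ne.symm hne) hsub₁ hsub₂
    have hmem : C' ∈ FamAt F C₁ := ⟨hC'.1.1, hsub₁, fun C'' hcore hsub => hall C'' hcore hsub⟩
    exact hC'.1.2 (hJ C₁ hC₁ C' hmem)
  refine ⟨part1, ?_⟩
  set R := {C | IsCore (Residual F J) C} with hR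
  set A := {C | IsCore F C} with hA
  have hex : ∀ C', ∃ C₁ C₂, IsCore (Residual F J) C' →
      IsCore F C₁ ∧ IsCore F C₂ ∧ C₁ ≠ C₂ ∧ bSubset C₁ C' ∧ bSubset C₂ C' := by
    intro C'
    by_cases hc : IsCore (Residual F J) C'
    · obtain ⟨C₁, C₂, h⟩ := part1 C' hc; exact ⟨C₁, C₂, fun _ => h⟩
    · exact ⟨C', C', fun hc' => absurd hc' hc⟩
  choose f g hfg using hex
  have hinjf : Set.InjOn f R := by
    intro x hx y hy hxy
    exact res_cores_sep hF hJ hx hy ((hfg x hx).1) ((hfg x hx).2.2.2.1)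
      (hxy ▸ (hfg y hy).2.2.2.1)
  have hinjg : Set.InjOn g R := by
    intro x hx y hy hxy
    exact res_cores_sep hF hJ hx hy ((hfg x hx).2.1) ((hfg x hx).2.2.2.2)
      (hxy ▸ (hfg y hy).2.2.2.2)
  have hdisj : Disjoint (f '' R) (g '' R) := by
    rw [Set.disjoint_left]
    rintro _ ⟨x, hx, rfl⟩ ⟨y, hy, hyx⟩
    have hxy : x = y := res_cores_sep hF hJ hx hy ((hfg x hx).1) ((hfg x hx).2.2.2.1)
      (hyx ▸ (hfg y hy).2.2.2.2)
    exact (hfg x hx).2.2.1 (hxy ▸ hyx.symm)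
  have hsubA : f '' R ∪ g '' R ⊆ A := by
    rintro _ (⟨x, hx, rfl⟩ | ⟨x, hx, rfl⟩)
    · exact (hfg x hx).1
    · exact (hfg x hx).2.1
  have h1 : (f '' R ∪ g '' R).ncard = (f '' R).ncard + (g '' R).ncard :=
    Set.ncard_union_eq hdisj (Set.toFinite _) (Set.toFinite _)
  have h2 : (f '' R).ncard = R.ncard := Set.ncard_image_of_injOn hinjf
  have h3 : (g '' R).ncard = R.ncard := Set.ncard_image_of_injOn hinjg
  have h4 : (f '' R ∪ g '' R).ncard ≤ A.ncard := Set.ncard_le_ncard hsubA (Set.toFinite _)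
  omega
end

section
/- Let F be a crossing biset-family on an n-element set V such that |S| ≥ q for the inner part S of every biset of F, and also |V∖S⁺| ≥ q for every (S,S⁺) ∈ F. If C is a collection of cores of F whose inner parts all contain a common element v, then the sets {V ∖ C⁺ : Ĉ ∈ C} are pairwise disjoint and nonempty; consequently |C| ≤ ⌊n/q⌋ (with q ≥ 1). -/
open Set

variable {V : Type*}

theorem stmt_16 [Fintype V] (F : Set (Set V × Set V)) (q : ℕ) (hq : 1 ≤ q)
    (hF : CrossingFamily F)
    (hsize : ∀ S ∈ F, q ≤ S.1.ncard ∧ q ≤ S.2ᶜ.ncard)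
    (C : Set (Set V × Set V)) (hC : ∀ X ∈ C, IsCore F X)
    (v : V) (hv : ∀ X ∈ C, v ∈ X.1) :
    (∀ X ∈ C, ∀ Y ∈ C, X ≠ Y → X.2ᶜ ∩ Y.2ᶜ = ∅) ∧
    (∀ X ∈ C, X.2ᶜ.Nonempty) ∧
    C.ncard ≤ Fintype.card V / q := by
  classical
  have hdisj : ∀ X ∈ C, ∀ Y ∈ C, X ≠ Y → X.2ᶜ ∩ Y.2ᶜ = ∅ := by
    intro X hX Y hY hne
    by_contra h
    have hcross : Cross X Y := by
      constructor
      · exact ⟨v, hv X hX, hv Y hY⟩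
      · intro huniv
        apply h
        ext x; simp only [Set.mem_inter_iff, Set.mem_compl_iff, Set.mem_empty_iff_false,
          iff_false, not_and, not_not]
        intro hx
        rcases (Set.eq_univ_iff_forall.mp huniv x) with h1 | h1
        · exact absurd h1 hx
        · exact h1
    obtain ⟨hcap, _⟩ := hF X (hC X hX).1 Y (hC Y hY).1 hcross
    have h1 : bCap X Y = X := (hC X hX).2 _ hcap ⟨Set.inter_subset_left, Set.inter_subset_left⟩
    have h2 : bCap X Y = Y := (hC Y hY).2 _ hcap ⟨Set.inter_subset_right, Set.inter_subset_right⟩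
    exact hne (h1 ▸ h2)
  have hne : ∀ X ∈ C, X.2ᶜ.Nonempty := by
    intro X hX
    have := (hsize X (hC X hX).1).2
    have : 0 < X.2ᶜ.ncard := lt_of_lt_of_le hq this
    exact Set.nonempty_of_ncard_ne_zero this.ne'
  refine ⟨hdisj, hne, ?_⟩
  have hfin : C.Finite := Set.toFinite C
  set Cf := hfin.toFinset with hCf
  set t : Set V × Set V → Finset V := fun X => X.2ᶜ.toFinset with ht
  have hcard : ∀ X ∈ Cf, q ≤ (t X).card := by
    intro X hX
    rw [hfin.mem_toFinset] at hX
    have := (hsize X (hC X hX).1).2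
    rwa [Set.ncard_eq_toFinset_card'] at this
  have hpd : ∀ X ∈ Cf, ∀ Y ∈ Cf, X ≠ Y → Disjoint (t X) (t Y) := by
    intro X hX Y hY hne'
    rw [hfin.mem_toFinset] at hX hY
    rw [Finset.disjoint_left]
    intro a ha hb
    have := hdisj X hX Y hY hne'
    have : a ∈ X.2ᶜ ∩ Y.2ᶜ := ⟨by simpa [ht] using ha, by simpa [ht] using hb⟩
    simp [hdisj X hX Y hY hne'] at this
  have key : Cf.card * q ≤ Fintype.card V := by
    calc Cf.card * q = ∑ _X ∈ Cf, q := by rw [Finset.sum_const, smul_eq_mul, mul_comm]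
    _ ≤ ∑ X ∈ Cf, (t X).card := Finset.sum_le_sum hcard
    _ = (Cf.biUnion t).card := (Finset.card_biUnion hpd).symm
    _ ≤ Fintype.card V := Finset.card_le_univ _
  have hC' : C.ncard = Cf.card := Set.ncard_eq_toFinset_card C hfin
  rw [hC']
  exact Nat.le_div_iff_mul_le (lt_of_lt_of_le Nat.zero_lt_one hq) |>.mpr key
end

section
/- Let S be a q-semi-intersecting biset-family on an n-element set V, and suppose U ⊆ S is a subfamily of pairwise disjoint bisets and J an edge set such that for every core Ĉ of S^J: (i) every Û ∈ U intersecting Ĉ intersects no other core of S^J, and (ii) the union B̂_C of Ĉ with all members of U intersecting Ĉ is not in S. Then the inner parts of the bisets B̂_C over all cores Ĉ of S^J are pairwise disjoint and each has size at least q+1; consequently the number of cores of S^J is at most ⌊n/(q+1)⌋. -/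
open Set

variable {V : Type*}

theorem stmt_17 [Fintype V] (q : ℕ) (S U : Set (Set V × Set V)) (J : Set (V × V))
    (hS : qSemiIntersecting q S)
    (hUS : U ⊆ S)
    (hdisj : ∀ X ∈ U, ∀ Y ∈ U, X ≠ Y → ¬ Intersects X Y)
    (B : (Set V × Set V) → (Set V × Set V))
    (hB : ∀ C, IsCore (Residual S J) C →
      B C = (C.1 ∪ ⋃ W ∈ {X ∈ U | Intersects X C}, W.1,
             C.2 ∪ ⋃ W ∈ {X ∈ U | Intersects X C}, W.2))
    (h1 : ∀ C, IsCore (Residual S J) C → ∀ W ∈ U, Intersects W C →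
      ∀ C', IsCore (Residual S J) C' → Intersects W C' → C' = C)
    (h2 : ∀ C, IsCore (Residual S J) C → B C ∉ S) :
    (∀ C, IsCore (Residual S J) C → ∀ C', IsCore (Residual S J) C' → C ≠ C' →
      (B C).1 ∩ (B C').1 = ∅) ∧
    (∀ C, IsCore (Residual S J) C → q + 1 ≤ (B C).1.ncard) ∧
    {C | IsCore (Residual S J) C}.ncard ≤ Fintype.card V / (q + 1) := by
  classical
  obtain ⟨hIC, hcard, hcup⟩ := hS
  have hRic : IntersectionClosed (Residual S J) := by
    intro X hX Y hY hXY
    refine ⟨hIC X hX.1 Y hY.1 hXY, ?_⟩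
    rintro ⟨e, heJ, he1, he2⟩
    have he2' : e.2 ∉ X.2 ∨ e.2 ∉ Y.2 := by
      by_contra h; push_neg at h
      exact he2 ⟨h.1, h.2⟩
    rcases he2' with h | h
    · exact hX.2 ⟨e, heJ, he1.1, h⟩
    · exact hY.2 ⟨e, heJ, he1.2, h⟩
  have hcoredisj : ∀ C, IsCore (Residual S J) C → ∀ C', IsCore (Residual S J) C' →
      C ≠ C' → ¬ Intersects C C' := by
    intro C hC C' hC' hne hint
    have hm := hRic C hC.1 C' hC'.1 hint
    have e1 := hC.2 _ hm ⟨inter_subset_left, inter_subset_left⟩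
    have e2 := hC'.2 _ hm ⟨inter_subset_right, inter_subset_right⟩
    exact hne (e1.symm.trans e2)
  have part1 : ∀ C, IsCore (Residual S J) C → ∀ C', IsCore (Residual S J) C' → C ≠ C' →
      (B C).1 ∩ (B C').1 = ∅ := by
    intro C hC C' hC' hne
    rw [hB C hC, hB C' hC']
    by_contra h
    obtain ⟨x, hx1, hx2⟩ := nonempty_iff_ne_empty.mpr h
    simp only [mem_union, mem_iUnion, mem_setOf_eq, exists_prop] at hx1 hx2
    rcases hx1 with h1a | ⟨W, ⟨hWU, hWC⟩, hxW⟩ <;>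
      rcases hx2 with h2a | ⟨W', ⟨hW'U, hW'C⟩, hxW'⟩
    · exact hcoredisj C hC C' hC' hne ⟨x, h1a, h2a⟩
    · exact hne (h1 C' hC' W' hW'U hW'C C hC ⟨x, hxW', h1a⟩)
    · exact hne ((h1 C hC W hWU hWC C' hC' ⟨x, hxW, h2a⟩).symm)
    · by_cases hWW : W = W'
      · subst hWW
        exact hne ((h1 C hC W hWU hWC C' hC' hW'C).symm)
      · exact hdisj W hWU W' hW'U hWW ⟨x, hxW, hxW'⟩
  have part2 : ∀ C, IsCore (Residual S J) C → q + 1 ≤ (B C).1.ncard := by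
    intro C hC
    by_contra hle
    push_neg at hle
    have hq : (B C).1.ncard ≤ q := Nat.lt_succ_iff.mp hle
    apply h2 C hC
    rw [hB C hC] at hq ⊢
    set T : Set (Set V × Set V) := {X ∈ U | Intersects X C} with hT
    have key : ∀ F : Finset (Set V × Set V), ↑F ⊆ T →
        (C.1 ∪ ⋃ W ∈ (F : Set (Set V × Set V)), W.1,
         C.2 ∪ ⋃ W ∈ (F : Set (Set V × Set V)), W.2) ∈ S := by
      intro F
      induction F using Finset.induction_on with
      | empty =>
        intro _
        simpa using hC.1.1
      | @insert a F ha ih =>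
        intro hsub
        have haT : a ∈ T := hsub (by simp)
        have hFT : (F : Set (Set V × Set V)) ⊆ T := by
          intro x hx; exact hsub (by simp [hx])
        have hA := ih hFT
        have haT' := haT
        obtain ⟨haU, x0, hx0a, hx0C⟩ : a ∈ U ∧ (a.1 ∩ C.1).Nonempty := haT'
        have hint : Intersects
            (C.1 ∪ ⋃ W ∈ (F : Set (Set V × Set V)), W.1,
             C.2 ∪ ⋃ W ∈ (F : Set (Set V × Set V)), W.2) a :=
          ⟨x0, Or.inl hx0C, hx0a⟩
        have hsubBig : (C.1 ∪ ⋃ W ∈ (F : Set (Set V × Set V)), W.1) ∪ a.1 ⊆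
            C.1 ∪ ⋃ W ∈ T, W.1 := by
          intro x hx
          simp only [mem_union, mem_iUnion, exists_prop] at hx ⊢
          rcases hx with (hx | ⟨W, hW, hxW⟩) | hx
          · exact Or.inl hx
          · exact Or.inr ⟨W, hFT hW, hxW⟩
          · exact Or.inr ⟨a, haT, hx⟩
        have hsize : ((C.1 ∪ ⋃ W ∈ (F : Set (Set V × Set V)), W.1) ∪ a.1).ncard ≤ q :=
          le_trans (Set.ncard_le_ncard hsubBig (Set.toFinite _)) hq
        have hmem := hcup _ hA a (hUS haU) hint hsize
        have heq : (C.1 ∪ ⋃ W ∈ ((insert a F : Finset (Set V × Set V)) :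
              Set (Set V × Set V)), W.1,
            C.2 ∪ ⋃ W ∈ ((insert a F : Finset (Set V × Set V)) : Set (Set V × Set V)), W.2) =
            bCup (C.1 ∪ ⋃ W ∈ (F : Set (Set V × Set V)), W.1,
              C.2 ∪ ⋃ W ∈ (F : Set (Set V × Set V)), W.2) a := by
          simp only [bCup, Finset.coe_insert, Set.biUnion_insert, Prod.mk.injEq]
          constructor
          · rw [Set.union_comm a.1, ← Set.union_assoc]
          · rw [Set.union_comm a.2, ← Set.union_assoc]
        rw [heq]
        exact hmem
    have := key (Set.toFinite T).toFinset (by rw [Set.Finite.coe_toFinset])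
    rwa [Set.Finite.coe_toFinset] at this
  refine ⟨part1, part2, ?_⟩
  have hfin : {C | IsCore (Residual S J) C}.Finite := Set.toFinite _
  set K := hfin.toFinset with hK
  have hKmem : ∀ C, C ∈ K ↔ IsCore (Residual S J) C := by
    intro C; simp [hK]
  let g : (Set V × Set V) → Finset V := fun C => (Set.toFinite (B C).1).toFinset
  have hgcard : ∀ C ∈ K, q + 1 ≤ (g C).card := by
    intro C hCK
    have := part2 C ((hKmem C).mp hCK)
    rwa [Set.ncard_eq_toFinset_card (B C).1 (Set.toFinite (B C).1)] at this
  have hgdisj : ∀ C ∈ K, ∀ C' ∈ K, C ≠ C' → Disjoint (g C) (g C') := by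
    intro C hCK C' hC'K hne
    have h := part1 C ((hKmem C).mp hCK) C' ((hKmem C').mp hC'K) hne
    rw [Finset.disjoint_left]
    intro x hx hx'
    simp only [g, Set.Finite.mem_toFinset] at hx hx'
    exact absurd h (Set.nonempty_iff_ne_empty.mp ⟨x, hx, hx'⟩)
  have hbiU : (K.biUnion g).card = ∑ C ∈ K, (g C).card :=
    Finset.card_biUnion hgdisj
  have hsum : K.card * (q + 1) ≤ ∑ C ∈ K, (g C).card := by
    calc K.card * (q + 1) = ∑ _C ∈ K, (q + 1) := by
          rw [Finset.sum_const, smul_eq_mul]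
      _ ≤ ∑ C ∈ K, (g C).card := Finset.sum_le_sum hgcard
  have hle : K.card * (q + 1) ≤ Fintype.card V :=
    le_trans hsum (hbiU ▸ Finset.card_le_univ _)
  have hKcard : {C | IsCore (Residual S J) C}.ncard = K.card :=
    Set.ncard_eq_toFinset_card _ hfin
  rw [hKcard]
  exact (Nat.le_div_iff_mul_le (Nat.succ_pos q)).mpr hle
end

section
/- Let F be a set-family on S ∪ T (S, T disjoint) that is (S,T)-crossing, and for each X ∈ F define the biset X̂' = (X ∩ S, S ∪ (X ∩ T)) on ground set S ∪ T. Then the biset-family F' = {X̂' : X ∈ F} is a crossing biset-family, and an edge (u,v) with u ∈ S, v ∈ T covers a set X (i.e. u ∈ X, v ∉ X) if and only if it covers the biset X̂'. -/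
open Set

variable {V : Type*}

theorem stmt_18 (S T : Set V) (hST : Disjoint S T) (hUniv : S ∪ T = Set.univ)
    (F : Set (Set V))
    (hF : ∀ X ∈ F, ∀ Y ∈ F, (X ∩ Y ∩ S).Nonempty → (T \ (X ∪ Y)).Nonempty →
      X ∩ Y ∈ F ∧ X ∪ Y ∈ F) :
    CrossingFamily ((fun X => (X ∩ S, S ∪ (X ∩ T))) '' F) ∧
    ∀ X ∈ F, ∀ u ∈ S, ∀ v ∈ T,
      ((u ∈ X ∧ v ∉ X) ↔ Covers (u, v) (X ∩ S, S ∪ (X ∩ T))) := by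
  constructor
  · rintro _ ⟨X, hX, rfl⟩ _ ⟨Y, hY, rfl⟩ ⟨hne, hout⟩
    simp only at hne hout ⊢
    -- find t ∉ outer union
    have hout' : ∃ t, t ∉ S ∪ (X ∩ T) ∪ (S ∪ (Y ∩ T)) := by
      by_contra h
      push_neg at h
      exact hout (Set.eq_univ_of_forall h)
    obtain ⟨t, ht⟩ := hout'
    simp only [Set.mem_union, Set.mem_inter_iff, not_or, not_and] at ht
    have htT : t ∈ T := by
      have := hUniv ▸ Set.mem_univ t
      rcases this with h | h
      · exact absurd h ht.1.1
      · exact h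
    have ht2 : (T \ (X ∪ Y)).Nonempty := by
      refine ⟨t, htT, ?_⟩
      rintro (h | h)
      · exact ht.1.2 h htT
      · exact ht.2.2 h htT
    have hne' : (X ∩ Y ∩ S).Nonempty := by
      obtain ⟨x, hx⟩ := hne
      exact ⟨x, ⟨⟨hx.1.1, hx.2.1⟩, hx.1.2⟩⟩
    obtain ⟨hcap, hcup⟩ := hF X hX Y hY hne' ht2
    constructor
    · refine ⟨X ∩ Y, hcap, ?_⟩
      simp only [bCap, Prod.mk.injEq]
      constructor
      · ext a; simp [Set.mem_inter_iff]; tauto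
      · ext a; simp [Set.mem_inter_iff, Set.mem_union]; tauto
    · refine ⟨X ∪ Y, hcup, ?_⟩
      simp only [bCup, Prod.mk.injEq]
      constructor
      · ext a; simp [Set.mem_inter_iff, Set.mem_union]; tauto
      · ext a; simp [Set.mem_inter_iff, Set.mem_union]; tauto
  · intro X hX u hu v hv
    have hvS : v ∉ S := fun h => hST.ne_of_mem h hv rfl
    constructor
    · rintro ⟨h1, h2⟩
      exact ⟨⟨h1, hu⟩, by simp [Covers]; tauto⟩
    · rintro ⟨h1, h2⟩
      simp only [Set.mem_compl_iff, Set.mem_union, Set.mem_inter_iff, not_or, not_and] at h2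
      exact ⟨h1.1, fun h => h2.2 h hv⟩
end
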